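/- For the F^{(-α)}-potential φ(ξ) = log ∫ (1 + α ξ·h(x))^{1/α} dμ(x), under analogous regularity conditions: if 0 < α < 1 then e^{αφ} is convex (φ is α-exponentially convex), and if α > 1 then e^{αφ} is concave (φ is α-exponentially concave). Indeed ∂²(e^{αφ})/∂ξⁱ∂ξʲ = α(1-α) e^{αφ(ξ)} Cov_ξ(Z_ξⁱ, Z_ξʲ) with Z_ξ = h(X)/(1 + α ξ·h(X)). -/

import Mathlib

open scoped RealInnerProductSpace
open MeasureTheory

/-- The normalizing integral of the `F^{(-α)}`-family. -/
noncomputable def Gint {d : ℕ} {X : Type*} [MeasurableSpace X] (μ : Measure X)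
    (α : ℝ) (h : X → EuclideanSpace ℝ (Fin d))
    (ξ : EuclideanSpace ℝ (Fin d)) : ℝ :=
  ∫ x, (1 + α * ⟪ξ, h x⟫) ^ (1/α) ∂μ

/-- The `F^{(-α)}`-potential `φ(ξ) = log ∫ (1 + α ξ·h)^{1/α} dμ`. -/
noncomputable def Gpot {d : ℕ} {X : Type*} [MeasurableSpace X] (μ : Measure X)
    (α : ℝ) (h : X → EuclideanSpace ℝ (Fin d))
    (ξ : EuclideanSpace ℝ (Fin d)) : ℝ :=
  Real.log (Gint μ α h ξ)

/-- The density `p(x,ξ) = (1 + α ξ·h(x))^{1/α} e^{-φ(ξ)}` of the `F^{(-α)}`-family. -/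
noncomputable def Gdens {d : ℕ} {X : Type*} [MeasurableSpace X] (μ : Measure X)
    (α : ℝ) (h : X → EuclideanSpace ℝ (Fin d))
    (ξ : EuclideanSpace ℝ (Fin d)) (x : X) : ℝ :=
  (1 + α * ⟪ξ, h x⟫) ^ (1/α) * Real.exp (-Gpot μ α h ξ)

/-- `v·Z_ξ` where `Z_ξ = h(X)/(1 + α ξ·h(X))`. -/
noncomputable def ZstatG {d : ℕ} {X : Type*} (α : ℝ)
    (h : X → EuclideanSpace ℝ (Fin d))
    (ξ v : EuclideanSpace ℝ (Fin d)) (x : X) : ℝ :=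
  ⟪v, h x⟫ / (1 + α * ⟪ξ, h x⟫)

noncomputable def Aint {d : ℕ} {X : Type*} [MeasurableSpace X] (μ : Measure X)
    (α : ℝ) (h : X → EuclideanSpace ℝ (Fin d))
    (v ξ : EuclideanSpace ℝ (Fin d)) : ℝ :=
  ∫ x, ⟪v, h x⟫ * (1 + α * ⟪ξ, h x⟫) ^ (1/α - 1) ∂μ

noncomputable def Bint {d : ℕ} {X : Type*} [MeasurableSpace X] (μ : Measure X)
    (α : ℝ) (h : X → EuclideanSpace ℝ (Fin d))
    (v ξ : EuclideanSpace ℝ (Fin d)) : ℝ :=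
  ∫ x, ⟪v, h x⟫ ^ 2 * (1 + α * ⟪ξ, h x⟫) ^ (1/α - 2) ∂μ

noncomputable def Dval {d : ℕ} {X : Type*} [MeasurableSpace X] (μ : Measure X)
    (α : ℝ) (h : X → EuclideanSpace ℝ (Fin d))
    (v ξ : EuclideanSpace ℝ (Fin d)) : ℝ :=
  Real.exp (α * Real.log (Gint μ α h ξ)) * (α * (Aint μ α h v ξ / Gint μ α h ξ))

lemma shiftDeriv {E : Type*} [AddCommGroup E] [Module ℝ E] {F : E → ℝ} {ξ v : E} {t₀ c : ℝ}
    (hF : HasDerivAt (fun s : ℝ => F (ξ + t₀ • v + s • v)) c 0) :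
    HasDerivAt (fun t : ℝ => F (ξ + t • v)) c t₀ := by
  have h1 : HasDerivAt (fun t : ℝ => t - t₀) 1 t₀ := (hasDerivAt_id t₀).sub_const t₀
  have hF' : HasDerivAt (fun s : ℝ => F (ξ + t₀ • v + s • v)) c (t₀ - t₀) := by
    rw [sub_self]; exact hF
  have h2 := HasDerivAt.comp (h := fun t : ℝ => t - t₀) (x := t₀) hF' h1
  have heq : ((fun s : ℝ => F (ξ + t₀ • v + s • v)) ∘ fun t : ℝ => t - t₀)
      = fun t : ℝ => F (ξ + t • v) := by
    funext t
    show F (ξ + t₀ • v + (t - t₀) • v) = F (ξ + t • v)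
    congr 1
    module
  rw [heq] at h2
  simpa using h2

lemma Gpos {d : ℕ} {X : Type*} [MeasurableSpace X] (μ : Measure X) [IsProbabilityMeasure μ]
    (α : ℝ) (h : X → EuclideanSpace ℝ (Fin d)) (ξ : EuclideanSpace ℝ (Fin d))
    (hp : ∀ x, 0 < 1 + α * ⟪ξ, h x⟫)
    (hI : Integrable (fun x => (1 + α * ⟪ξ, h x⟫) ^ (1/α)) μ) :
    0 < Gint μ α h ξ := by
  have hnn : (0 : X → ℝ) ≤ fun x => (1 + α * ⟪ξ, h x⟫) ^ (1/α) :=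
    fun x => Real.rpow_nonneg (hp x).le _
  have hsupp : Function.support (fun x => (1 + α * ⟪ξ, h x⟫) ^ (1/α)) = Set.univ :=
    Set.eq_univ_of_forall fun x => (Real.rpow_pos_of_pos (hp x) _).ne'
  have := (integral_pos_iff_support_of_nonneg hnn hI).2 (by
    rw [hsupp, measure_univ]; norm_num)
  exact this

lemma d1 {d : ℕ} {X : Type*} [MeasurableSpace X] (μ : Measure X)
    (α : ℝ) (h : X → EuclideanSpace ℝ (Fin d)) (ξ v : EuclideanSpace ℝ (Fin d))
    (hg : 0 < Gint μ α h ξ)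
    (h0 : HasDerivAt (fun t : ℝ => Gint μ α h (ξ + t • v)) (Aint μ α h v ξ) 0) :
    HasDerivAt (fun t : ℝ => Real.exp (α * Gpot μ α h (ξ + t • v))) (Dval μ α h v ξ) 0 := by
  have hgn : Gint μ α h (ξ + (0:ℝ) • v) ≠ 0 := by simpa using hg.ne'
  have hlog := h0.log hgn
  have hexp := (hlog.const_mul α).exp
  simp only [zero_smul, add_zero] at hexp
  simpa [Gpot, Dval] using hexp

lemma d2 {d : ℕ} {X : Type*} [MeasurableSpace X] (μ : Measure X)
    (α : ℝ) (h : X → EuclideanSpace ℝ (Fin d)) (ξ v : EuclideanSpace ℝ (Fin d))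
    (hg : 0 < Gint μ α h ξ)
    (h0 : HasDerivAt (fun t : ℝ => Gint μ α h (ξ + t • v)) (Aint μ α h v ξ) 0)
    (h1 : HasDerivAt (fun t : ℝ => Aint μ α h v (ξ + t • v)) ((1 - α) * Bint μ α h v ξ) 0) :
    HasDerivAt (fun t : ℝ => Dval μ α h v (ξ + t • v))
      (α * (1 - α) * Real.exp (α * Real.log (Gint μ α h ξ)) *
        (Bint μ α h v ξ / Gint μ α h ξ - (Aint μ α h v ξ / Gint μ α h ξ) ^ 2)) 0 := by
  have hgn : Gint μ α h (ξ + (0:ℝ) • v) ≠ 0 := by simpa using hg.ne'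
  have hexp := ((h0.log hgn).const_mul α).exp
  have hdiv := (h1.div h0 hgn).const_mul α
  have hmul := hexp.mul hdiv
  simp only [zero_smul, add_zero] at hmul
  simp only [Pi.mul_def, Pi.div_apply, zero_smul, add_zero] at hmul
  have hfun : (fun t : ℝ => Real.exp (α * Real.log (Gint μ α h (ξ + t • v))) *
      (α * (Aint μ α h v (ξ + t • v) / Gint μ α h (ξ + t • v))))
      = fun t : ℝ => Dval μ α h v (ξ + t • v) := by
    funext t; rw [Dval]
  rw [hfun] at hmul
  refine hmul.congr_deriv ?_
  field_simp
  ring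

lemma norm1 {d : ℕ} {X : Type*} [MeasurableSpace X] (μ : Measure X)
    (α : ℝ) (h : X → EuclideanSpace ℝ (Fin d)) (ξ : EuclideanSpace ℝ (Fin d))
    (hg : 0 < Gint μ α h ξ) :
    ∫ x, Gdens μ α h ξ x ∂μ = 1 := by
  simp only [Gdens, Gpot, Real.exp_neg, Real.exp_log hg]
  rw [integral_mul_const]
  show Gint μ α h ξ * (Gint μ α h ξ)⁻¹ = 1
  exact mul_inv_cancel₀ hg.ne'

lemma int1 {d : ℕ} {X : Type*} [MeasurableSpace X] (μ : Measure X)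
    (α : ℝ) (h : X → EuclideanSpace ℝ (Fin d)) (ξ v : EuclideanSpace ℝ (Fin d))
    (hp : ∀ x, 0 < 1 + α * ⟪ξ, h x⟫) (hg : 0 < Gint μ α h ξ) :
    ∫ x, ZstatG α h ξ v x * Gdens μ α h ξ x ∂μ = Aint μ α h v ξ / Gint μ α h ξ := by
  simp only [Gdens, Gpot, ZstatG, Real.exp_neg, Real.exp_log hg]
  have key : ∀ x, ⟪v, h x⟫ / (1 + α * ⟪ξ, h x⟫) *
      ((1 + α * ⟪ξ, h x⟫) ^ (1/α) * (Gint μ α h ξ)⁻¹)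
      = (⟪v, h x⟫ * (1 + α * ⟪ξ, h x⟫) ^ (1/α - 1)) * (Gint μ α h ξ)⁻¹ := by
    intro x
    rw [Real.rpow_sub_one (hp x).ne']
    field_simp
  simp only [key]
  rw [integral_mul_const, div_eq_mul_inv]
  rfl

lemma int2 {d : ℕ} {X : Type*} [MeasurableSpace X] (μ : Measure X)
    (α : ℝ) (h : X → EuclideanSpace ℝ (Fin d)) (ξ v : EuclideanSpace ℝ (Fin d))
    (hp : ∀ x, 0 < 1 + α * ⟪ξ, h x⟫) (hg : 0 < Gint μ α h ξ) :
    ∫ x, ZstatG α h ξ v x ^ 2 * Gdens μ α h ξ x ∂μ = Bint μ α h v ξ / Gint μ α h ξ := by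
  simp only [Gdens, Gpot, ZstatG, Real.exp_neg, Real.exp_log hg]
  have key : ∀ x, (⟪v, h x⟫ / (1 + α * ⟪ξ, h x⟫)) ^ 2 *
      ((1 + α * ⟪ξ, h x⟫) ^ (1/α) * (Gint μ α h ξ)⁻¹)
      = (⟪v, h x⟫ ^ 2 * (1 + α * ⟪ξ, h x⟫) ^ (1/α - 2)) * (Gint μ α h ξ)⁻¹ := by
    intro x
    rw [show (1/α - 2 : ℝ) = 1/α - (2:ℝ) from rfl, Real.rpow_sub (hp x), Real.rpow_two]
    field_simp
  simp only [key]
  rw [integral_mul_const, div_eq_mul_inv]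
  rfl

lemma varnonneg {d : ℕ} {X : Type*} [MeasurableSpace X] (μ : Measure X)
    (α : ℝ) (h : X → EuclideanSpace ℝ (Fin d)) (ξ v : EuclideanSpace ℝ (Fin d))
    (hp : ∀ x, 0 < 1 + α * ⟪ξ, h x⟫)
    (hnorm : ∫ x, Gdens μ α h ξ x ∂μ = 1)
    (h0 : Integrable (fun x => Gdens μ α h ξ x) μ)
    (h1 : Integrable (fun x => ZstatG α h ξ v x * Gdens μ α h ξ x) μ)
    (h2 : Integrable (fun x => ZstatG α h ξ v x ^ 2 * Gdens μ α h ξ x) μ) :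
    (∫ x, ZstatG α h ξ v x * Gdens μ α h ξ x ∂μ) ^ 2 ≤
      ∫ x, ZstatG α h ξ v x ^ 2 * Gdens μ α h ξ x ∂μ := by
  set Z := ZstatG α h ξ v with hZ
  set G := Gdens μ α h ξ with hG
  set m := ∫ x, Z x * G x ∂μ with hm
  have hGnn : ∀ x, 0 ≤ G x := fun x =>
    mul_nonneg (Real.rpow_nonneg (hp x).le _) (Real.exp_nonneg _)
  have key : 0 ≤ ∫ x, (Z x - m) ^ 2 * G x ∂μ :=
    integral_nonneg fun x => mul_nonneg (sq_nonneg _) (hGnn x)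
  have expand : ∀ x, (Z x - m) ^ 2 * G x
      = Z x ^ 2 * G x - (2 * m) * (Z x * G x) + m ^ 2 * G x := by
    intro x; ring
  rw [show (fun x => (Z x - m) ^ 2 * G x)
      = fun x => Z x ^ 2 * G x - (2 * m) * (Z x * G x) + m ^ 2 * G x from funext expand] at key
  have hs : Integrable (fun x => Z x ^ 2 * G x - 2 * m * (Z x * G x)) μ :=
    h2.sub (h1.const_mul _)
  have hc : Integrable (fun x => m ^ 2 * G x) μ := h0.const_mul _
  rw [integral_add hs hc, integral_sub h2 (h1.const_mul _), integral_const_mul,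
    integral_const_mul, hnorm] at key
  nlinarith [key]

set_option maxHeartbeats 1000000 in
/-- for the `F^{(-α)}`-potential, the Hessian of `e^{αφ}` is
`α(1-α) e^{αφ(ξ)} Cov_ξ(Z_ξ)`; hence `e^{αφ}` is convex on `Ω` if `0 < α < 1`
and concave on `Ω` if `α > 1`. -/
theorem stmt14 {d : ℕ} {X : Type*} [MeasurableSpace X] (μ : Measure X)
    [IsProbabilityMeasure μ] (α : ℝ) (hα : 0 < α)
    (h : X → EuclideanSpace ℝ (Fin d)) (hmeas : Measurable h)
    (hh : ∀ x, ∀ i, 0 < h x i)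
    (Ω : Set (EuclideanSpace ℝ (Fin d))) (hΩ : IsOpen Ω) (hconv : Convex ℝ Ω)
    (hpos : ∀ ξ ∈ Ω, ∀ x, 0 < 1 + α * ⟪ξ, h x⟫)
    (hint : ∀ ξ ∈ Ω, ∀ v : EuclideanSpace ℝ (Fin d), ∀ k : ℕ, k ≤ 2 →
      Integrable (fun x => ZstatG α h ξ v x ^ k *
        (1 + α * ⟪ξ, h x⟫) ^ (1/α)) μ)
    -- differentiation under the integral sign:
    (hDUI0 : ∀ ξ ∈ Ω, ∀ v : EuclideanSpace ℝ (Fin d),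
      HasDerivAt (fun t : ℝ => Gint μ α h (ξ + t • v))
        (∫ x, ⟪v, h x⟫ * (1 + α * ⟪ξ, h x⟫) ^ (1/α - 1) ∂μ) 0)
    (hDUI1 : ∀ ξ ∈ Ω, ∀ v : EuclideanSpace ℝ (Fin d),
      HasDerivAt (fun t : ℝ =>
          ∫ x, ⟪v, h x⟫ * (1 + α * ⟪ξ + t • v, h x⟫) ^ (1/α - 1) ∂μ)
        ((1 - α) *
          ∫ x, ⟪v, h x⟫ ^ 2 * (1 + α * ⟪ξ, h x⟫) ^ (1/α - 2) ∂μ) 0) :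
    (∀ ξ ∈ Ω, ∀ v : EuclideanSpace ℝ (Fin d),
      deriv (fun t : ℝ =>
          deriv (fun s : ℝ => Real.exp (α * Gpot μ α h (ξ + s • v))) t) 0 =
        α * (1 - α) * Real.exp (α * Gpot μ α h ξ) *
          ((∫ x, ZstatG α h ξ v x ^ 2 * Gdens μ α h ξ x ∂μ) -
            (∫ x, ZstatG α h ξ v x * Gdens μ α h ξ x ∂μ) ^ 2)) ∧
    (α < 1 → ConvexOn ℝ Ω (fun ξ => Real.exp (α * Gpot μ α h ξ))) ∧
    (1 < α → ConcaveOn ℝ Ω (fun ξ => Real.exp (α * Gpot μ α h ξ))) := by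
  have hg : ∀ ξ ∈ Ω, 0 < Gint μ α h ξ := by
    intro ξ hξ
    have hI := hint ξ hξ 0 0 (by norm_num)
    simp only [pow_zero, one_mul] at hI
    exact Gpos μ α h ξ (hpos ξ hξ) hI
  have hGd : ∀ ξ ∈ Ω, ∀ v : EuclideanSpace ℝ (Fin d), ∀ k : ℕ, k ≤ 2 →
      Integrable (fun x => ZstatG α h ξ v x ^ k * Gdens μ α h ξ x) μ := by
    intro ξ hξ v k hk
    have h1 := (hint ξ hξ v k hk).mul_const (Gint μ α h ξ)⁻¹
    refine h1.congr (Filter.Eventually.of_forall fun x => ?_)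
    simp [Gdens, Gpot, Real.exp_neg, Real.exp_log (hg ξ hξ), mul_assoc]
  have hvar : ∀ ξ ∈ Ω, ∀ v : EuclideanSpace ℝ (Fin d),
      0 ≤ Bint μ α h v ξ / Gint μ α h ξ - (Aint μ α h v ξ / Gint μ α h ξ) ^ 2 := by
    intro ξ hξ v
    have h0 := hGd ξ hξ v 0 (by norm_num); simp only [pow_zero, one_mul] at h0
    have h1 := hGd ξ hξ v 1 (by norm_num); simp only [pow_one] at h1
    have h2 := hGd ξ hξ v 2 le_rfl
    have hvv := varnonneg μ α h ξ v (hpos ξ hξ) (norm1 μ α h ξ (hg ξ hξ)) h0 h1 h2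
    rw [← int2 μ α h ξ v (hpos ξ hξ) (hg ξ hξ), ← int1 μ α h ξ v (hpos ξ hξ) (hg ξ hξ)]
    linarith
  have hψ : ∀ (ξ v : EuclideanSpace ℝ (Fin d)), ∀ t₀ : ℝ, ξ + t₀ • v ∈ Ω →
      HasDerivAt (fun t : ℝ => Real.exp (α * Gpot μ α h (ξ + t • v)))
        (Dval μ α h v (ξ + t₀ • v)) t₀ := by
    intro ξ v t₀ hb
    exact shiftDeriv (F := fun η => Real.exp (α * Gpot μ α h η))
      (d1 μ α h (ξ + t₀ • v) v (hg _ hb) (hDUI0 _ hb v))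
  have hE : ∀ (ξ v : EuclideanSpace ℝ (Fin d)), ∀ t₀ : ℝ, ξ + t₀ • v ∈ Ω →
      HasDerivAt (fun t : ℝ => Dval μ α h v (ξ + t • v))
        (α * (1 - α) * Real.exp (α * Real.log (Gint μ α h (ξ + t₀ • v))) *
          (Bint μ α h v (ξ + t₀ • v) / Gint μ α h (ξ + t₀ • v) -
            (Aint μ α h v (ξ + t₀ • v) / Gint μ α h (ξ + t₀ • v)) ^ 2)) t₀ := by
    intro ξ v t₀ hb
    exact shiftDeriv (F := fun η => Dval μ α h v η)
      (d2 μ α h (ξ + t₀ • v) v (hg _ hb) (hDUI0 _ hb v) (hDUI1 _ hb v))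
  refine ⟨?_, ?_, ?_⟩
  · intro ξ hξ v
    have hmem : ∀ᶠ t in nhds (0:ℝ), ξ + t • v ∈ Ω := by
      have hc : Continuous fun t : ℝ => ξ + t • v :=
        continuous_const.add (continuous_id.smul continuous_const)
      have h0 : Ω ∈ nhds ((fun t : ℝ => ξ + t • v) 0) := by
        simpa using hΩ.mem_nhds hξ
      exact hc.continuousAt.preimage_mem_nhds h0
    have hfeq : (fun t : ℝ => deriv (fun s : ℝ => Real.exp (α * Gpot μ α h (ξ + s • v))) t)
        =ᶠ[nhds (0:ℝ)] fun t => Dval μ α h v (ξ + t • v) :=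
      hmem.mono fun t ht => (hψ ξ v t ht).deriv
    rw [hfeq.deriv_eq, (hE ξ v 0 (by simpa using hξ)).deriv]
    simp only [zero_smul, add_zero]
    rw [int1 μ α h ξ v (hpos ξ hξ) (hg ξ hξ), int2 μ α h ξ v (hpos ξ hξ) (hg ξ hξ)]
    rfl
  · intro hα1
    refine ⟨hconv, fun x hx y hy a b ha hb hab => ?_⟩
    set v := y - x with hv
    set U : Set ℝ := (fun t : ℝ => x + t • v) ⁻¹' Ω with hU
    have hUopen : IsOpen U := hΩ.preimage (continuous_const.add (continuous_id.smul continuous_const))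
    have hUconv : Convex ℝ U := by
      intro s hs t ht a' b' ha' hb' hab'
      have key : a' • (x + s • v) + b' • (x + t • v)
          = (a' + b') • x + (a' * s + b' * t) • v := by module
      have hkey : x + (a' * s + b' * t) • v = a' • (x + s • v) + b' • (x + t • v) := by
        rw [key, hab', one_smul]
      show x + (a' • s + b' • t) • v ∈ Ω
      rw [smul_eq_mul, smul_eq_mul, hkey]
      exact hconv hs ht ha' hb' hab'
    have hmono := convexOn_of_hasDerivWithinAt2_nonneg
      (f := fun t : ℝ => Real.exp (α * Gpot μ α h (x + t • v)))
      (f' := fun t : ℝ => Dval μ α h v (x + t • v))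
      (f'' := fun t : ℝ => α * (1 - α) * Real.exp (α * Real.log (Gint μ α h (x + t • v))) *
        (Bint μ α h v (x + t • v) / Gint μ α h (x + t • v) -
          (Aint μ α h v (x + t • v) / Gint μ α h (x + t • v)) ^ 2))
      hUconv
      (fun t ht => ((hψ x v t ht).continuousAt).continuousWithinAt)
      (fun t ht => (hψ x v t (by rwa [hUopen.interior_eq] at ht)).hasDerivWithinAt)
      (fun t ht => (hE x v t (by rwa [hUopen.interior_eq] at ht)).hasDerivWithinAt)
      (fun t ht => by
        have ht' : x + t • v ∈ Ω := by rwa [hUopen.interior_eq] at ht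
        exact mul_nonneg
          (mul_nonneg (mul_nonneg hα.le (by linarith)) (Real.exp_nonneg _))
          (hvar _ ht' v))
    have h0U : (0:ℝ) ∈ U := by show x + (0:ℝ) • v ∈ Ω; simpa using hx
    have h1U : (1:ℝ) ∈ U := by
      show x + (1:ℝ) • v ∈ Ω
      have he : x + (1:ℝ) • v = y := by rw [hv]; module
      rwa [he]
    have hle := hmono.2 h0U h1U ha hb hab
    simp only [smul_eq_mul, mul_zero, mul_one, zero_add, zero_smul, add_zero] at hle
    have hxy : x + b • v = a • x + b • y := by
      rw [hv, show a = 1 - b by linarith]; module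
    have hy1 : x + (1:ℝ) • v = y := by rw [hv]; module
    rw [hxy, hy1] at hle
    simpa using hle
  · intro hα1
    refine ⟨hconv, fun x hx y hy a b ha hb hab => ?_⟩
    set v := y - x with hv
    set U : Set ℝ := (fun t : ℝ => x + t • v) ⁻¹' Ω with hU
    have hUopen : IsOpen U := hΩ.preimage (continuous_const.add (continuous_id.smul continuous_const))
    have hUconv : Convex ℝ U := by
      intro s hs t ht a' b' ha' hb' hab'
      have key : a' • (x + s • v) + b' • (x + t • v)
          = (a' + b') • x + (a' * s + b' * t) • v := by module
      have hkey : x + (a' * s + b' * t) • v = a' • (x + s • v) + b' • (x + t • v) := by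
        rw [key, hab', one_smul]
      show x + (a' • s + b' • t) • v ∈ Ω
      rw [smul_eq_mul, smul_eq_mul, hkey]
      exact hconv hs ht ha' hb' hab'
    have hmono := concaveOn_of_hasDerivWithinAt2_nonpos
      (f := fun t : ℝ => Real.exp (α * Gpot μ α h (x + t • v)))
      (f' := fun t : ℝ => Dval μ α h v (x + t • v))
      (f'' := fun t : ℝ => α * (1 - α) * Real.exp (α * Real.log (Gint μ α h (x + t • v))) *
        (Bint μ α h v (x + t • v) / Gint μ α h (x + t • v) -
          (Aint μ α h v (x + t • v) / Gint μ α h (x + t • v)) ^ 2))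
      hUconv
      (fun t ht => ((hψ x v t ht).continuousAt).continuousWithinAt)
      (fun t ht => (hψ x v t (by rwa [hUopen.interior_eq] at ht)).hasDerivWithinAt)
      (fun t ht => (hE x v t (by rwa [hUopen.interior_eq] at ht)).hasDerivWithinAt)
      (fun t ht => by
        have ht' : x + t • v ∈ Ω := by rwa [hUopen.interior_eq] at ht
        have hEV : 0 ≤ Real.exp (α * Real.log (Gint μ α h (x + t • v))) *
            (Bint μ α h v (x + t • v) / Gint μ α h (x + t • v) -
              (Aint μ α h v (x + t • v) / Gint μ α h (x + t • v)) ^ 2) :=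
          mul_nonneg (Real.exp_nonneg _) (hvar _ ht' v)
        nlinarith [mul_nonneg (mul_nonneg hα.le (by linarith : (0:ℝ) ≤ α - 1)) hEV])
    have h0U : (0:ℝ) ∈ U := by show x + (0:ℝ) • v ∈ Ω; simpa using hx
    have h1U : (1:ℝ) ∈ U := by
      show x + (1:ℝ) • v ∈ Ω
      have he : x + (1:ℝ) • v = y := by rw [hv]; module
      rwa [he]
    have hle := hmono.2 h0U h1U ha hb hab
    simp only [smul_eq_mul, mul_zero, mul_one, zero_add, zero_smul, add_zero] at hle
    have hxy : x + b • v = a • x + b • y := by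
      rw [hv, show a = 1 - b by linarith]; module
    have hy1 : x + (1:ℝ) • v = y := by rw [hv]; module
    rw [hxy, hy1] at hle
    simpa using hle
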